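/- Let Q₁=(1,1,1), Q₂=(1,0,0), Q₃=(0,1,0), Q₄=(0,0,0) in ℝ³. A point (x, y, z) belongs to the convex hull of {Q₁, Q₂, Q₃, Q₄} if and only if 0 ≤ x ≤ 1, 0 ≤ y ≤ 1, and max{x + y − 1, 0} ≤ z ≤ min{x, y}. -/
import Mathlib


/-- Let `Q₁=(1,1,1)`, `Q₂=(1,0,0)`, `Q₃=(0,1,0)`, `Q₄=(0,0,0)` in `ℝ³`.
A point `(x, y, z)` belongs to the convex hull of `{Q₁, Q₂, Q₃, Q₄}` if and only if
`0 ≤ x ≤ 1`, `0 ≤ y ≤ 1`, and `max {x + y − 1, 0} ≤ z ≤ min {x, y}`. -/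
theorem stmt0 (x y z : ℝ) :
    (![x, y, z]) ∈ convexHull ℝ
      ({![1, 1, 1], ![1, 0, 0], ![0, 1, 0], ![0, 0, 0]} : Set (Fin 3 → ℝ)) ↔
      (0 ≤ x ∧ x ≤ 1) ∧ (0 ≤ y ∧ y ≤ 1) ∧ max (x + y - 1) 0 ≤ z ∧ z ≤ min x y := by
  constructor
  · intro h
    set S : Set (Fin 3 → ℝ) :=
      {p | 0 ≤ p 0 ∧ p 0 ≤ 1 ∧ 0 ≤ p 1 ∧ p 1 ≤ 1 ∧ p 0 + p 1 - 1 ≤ p 2 ∧ 0 ≤ p 2 ∧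
        p 2 ≤ p 0 ∧ p 2 ≤ p 1} with hS
    have hconv : Convex ℝ S := by
      intro p hp q hq a b ha hb hab
      simp only [hS, Set.mem_setOf_eq] at hp hq
      obtain ⟨hp1, hp2, hp3, hp4, hp5, hp6, hp7, hp8⟩ := hp
      obtain ⟨hq1, hq2, hq3, hq4, hq5, hq6, hq7, hq8⟩ := hq
      have A : ∀ {u v : ℝ}, u ≤ v → a * u ≤ a * v :=
        fun h => mul_le_mul_of_nonneg_left h ha
      have B : ∀ {u v : ℝ}, u ≤ v → b * u ≤ b * v :=
        fun h => mul_le_mul_of_nonneg_left h hb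
      simp only [hS, Set.mem_setOf_eq, Pi.add_apply, Pi.smul_apply, smul_eq_mul]
      refine ⟨?_, ?_, ?_, ?_, ?_, ?_, ?_, ?_⟩ <;>
        linarith [A hp1, A hp2, A hp3, A hp4, A hp5, A hp6, A hp7, A hp8,
          B hq1, B hq2, B hq3, B hq4, B hq5, B hq6, B hq7, B hq8]
    have hsub : ({![1, 1, 1], ![1, 0, 0], ![0, 1, 0], ![0, 0, 0]} : Set (Fin 3 → ℝ)) ⊆ S := by
      intro p hp
      simp only [Set.mem_insert_iff, Set.mem_singleton_iff] at hp
      rcases hp with h | h | h | h <;> subst h <;>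
        simp [hS, Set.mem_setOf_eq]
    have := convexHull_min hsub hconv h
    simp only [hS, Set.mem_setOf_eq, Matrix.cons_val_zero, Matrix.cons_val_one,
      Matrix.head_cons, Matrix.cons_val_two, Matrix.tail_cons] at this
    refine ⟨⟨this.1, this.2.1⟩, ⟨this.2.2.1, this.2.2.2.1⟩, ?_, ?_⟩
    · exact max_le this.2.2.2.2.1 this.2.2.2.2.2.1
    · exact le_min this.2.2.2.2.2.2.1 this.2.2.2.2.2.2.2
  · rintro ⟨⟨hx0, hx1⟩, ⟨hy0, hy1⟩, hz1, hz2⟩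
    have hz0 : 0 ≤ z := le_trans (le_max_right _ _) hz1
    have hzx : z ≤ x := le_trans hz2 (min_le_left _ _)
    have hzy : z ≤ y := le_trans hz2 (min_le_right _ _)
    have hzs : x + y - 1 ≤ z := le_trans (le_max_left _ _) hz1
    have key : (![x, y, z]) =
        Finset.univ.centerMass (![z, x - z, y - z, 1 - x - y + z] : Fin 4 → ℝ)
          (![![1, 1, 1], ![1, 0, 0], ![0, 1, 0], ![0, 0, 0]] : Fin 4 → Fin 3 → ℝ) := by
      rw [Finset.centerMass]
      have hsum : ∑ i : Fin 4, (![z, x - z, y - z, 1 - x - y + z] : Fin 4 → ℝ) i = 1 := by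
        simp [Fin.sum_univ_four]; ring
      rw [hsum]
      funext i
      fin_cases i <;>
        simp [Fin.sum_univ_four, Pi.add_apply, Pi.smul_apply, smul_eq_mul]
    rw [key]
    apply Finset.centerMass_mem_convexHull
    · intro i _
      fin_cases i <;> simp <;> linarith
    · have : ∑ i : Fin 4, (![z, x - z, y - z, 1 - x - y + z] : Fin 4 → ℝ) i = 1 := by
        simp [Fin.sum_univ_four]; ring
      rw [this]; norm_num
    · intro i _
      fin_cases i <;> simp [Set.mem_insert_iff]
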